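/- (Corollary 1.3.1.) Let U ⊆ ℝᵐ be open, β and β₁ closed 2-form fields on U, both nondegenerate at every point, and let K : U → Matrix (Fin m) (Fin m) ℝ be a C^∞ matrix field with β₁(x)(u,v) = β(x)(K(x)u, v) for all x, u, v; set β₂(x)(u,v) = β(x)(K(x)²u, v). Let t ∈ ℝ be such that K(x) + t·1 is invertible for every x ∈ U, and define τ(x)(u,v) = β₁(x)((K(x) + t·1)⁻¹u, v). Then τ is a (C^∞, alternating) 2-form field, and for all x ∈ U and u₁, u₂, u₃ ∈ ℝᵐ: dτ(x)((K(x)+t·1)u₁, (K(x)+t·1)u₂, (K(x)+t·1)u₃) = t·β(x)(N_K(x)(u₁,u₂), u₃) = −t·dβ₂(x)(u₁,u₂,u₃). -/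

import Mathlib

open Matrix

/-- Directional derivative of a matrix field, entrywise. -/
noncomputable def matDirDeriv {d n : ℕ} (G : (Fin d → ℝ) → Matrix (Fin n) (Fin n) ℝ)
    (x w : Fin d → ℝ) : Matrix (Fin n) (Fin n) ℝ :=
  Matrix.of fun i j => fderiv ℝ (fun y => G y i j) x w

/-- The Nijenhuis torsion of a matrix field `G`. -/
noncomputable def nijenhuis {n : ℕ} (G : (Fin n → ℝ) → Matrix (Fin n) (Fin n) ℝ)
    (x u v : Fin n → ℝ) : Fin n → ℝ :=
  (matDirDeriv G x ((G x).mulVec u)).mulVec v - (matDirDeriv G x ((G x).mulVec v)).mulVec u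
    + (G x).mulVec ((matDirDeriv G x v).mulVec u) - (G x).mulVec ((matDirDeriv G x u).mulVec v)

/-- Exterior derivative of the 2-form field `(u,v) ↦ u ⬝ᵥ β(x)·v`. -/
noncomputable def form2ExtDeriv {m : ℕ} (β : (Fin m → ℝ) → Matrix (Fin m) (Fin m) ℝ)
    (x u v w : Fin m → ℝ) : ℝ :=
  v ⬝ᵥ (matDirDeriv β x u).mulVec w - u ⬝ᵥ (matDirDeriv β x v).mulVec w
    + u ⬝ᵥ (matDirDeriv β x w).mulVec v

/-- The 2-form field `τ(x)(u,v) = β₁(x)((K(x)+t·1)⁻¹u, v)`, in matrix form. -/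
noncomputable def tauField {m : ℕ} (β₁ K : (Fin m → ℝ) → Matrix (Fin m) (Fin m) ℝ) (t : ℝ) :
    (Fin m → ℝ) → Matrix (Fin m) (Fin m) ℝ :=
  fun x => ((K x + t • (1 : Matrix (Fin m) (Fin m) ℝ))⁻¹)ᵀ * β₁ x

namespace Cor131

variable {d n : ℕ}

lemma mdd_apply (G : (Fin d → ℝ) → Matrix (Fin n) (Fin n) ℝ) (x w : Fin d → ℝ) (i j : Fin n) :
    matDirDeriv G x w i j = fderiv ℝ (fun y => G y i j) x w := rfl

@[simp] lemma mdd_dir_add (G : (Fin d → ℝ) → Matrix (Fin n) (Fin n) ℝ) (x w₁ w₂ : Fin d → ℝ) :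
    matDirDeriv G x (w₁ + w₂) = matDirDeriv G x w₁ + matDirDeriv G x w₂ := by
  ext i j
  simp [matDirDeriv]

@[simp] lemma mdd_dir_smul (G : (Fin d → ℝ) → Matrix (Fin n) (Fin n) ℝ) (x : Fin d → ℝ) (c : ℝ)
    (w : Fin d → ℝ) : matDirDeriv G x (c • w) = c • matDirDeriv G x w := by
  ext i j
  simp [matDirDeriv]

lemma mdd_congr {F G : (Fin d → ℝ) → Matrix (Fin n) (Fin n) ℝ} {U : Set (Fin d → ℝ)}
    (hU : IsOpen U) {x : Fin d → ℝ} (hx : x ∈ U) (h : ∀ y ∈ U, F y = G y) :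
    matDirDeriv F x = matDirDeriv G x := by
  funext w
  ext i j
  simp only [mdd_apply]
  have hev : (fun y => F y i j) =ᶠ[nhds x] (fun y => G y i j) :=
    Filter.eventuallyEq_of_mem (hU.mem_nhds hx) (fun y hy => by rw [h y hy])
  rw [hev.fderiv_eq]

lemma mdd_const (C : Matrix (Fin n) (Fin n) ℝ) (x w : Fin d → ℝ) :
    matDirDeriv (fun _ => C) x w = 0 := by
  ext i j
  simp [matDirDeriv]

lemma mdd_transpose (G : (Fin d → ℝ) → Matrix (Fin n) (Fin n) ℝ) (x w : Fin d → ℝ) :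
    matDirDeriv (fun y => (G y)ᵀ) x w = (matDirDeriv G x w)ᵀ := rfl

lemma mdd_neg (G : (Fin d → ℝ) → Matrix (Fin n) (Fin n) ℝ) (x w : Fin d → ℝ) :
    matDirDeriv (fun y => -(G y)) x w = -(matDirDeriv G x w) := by
  ext i j
  have : (fun y => (-(G y)) i j) = fun y => -(G y i j) := rfl
  simp [matDirDeriv, this]

lemma mdd_add_const (G : (Fin d → ℝ) → Matrix (Fin n) (Fin n) ℝ) (C : Matrix (Fin n) (Fin n) ℝ)
    (x w : Fin d → ℝ) :
    matDirDeriv (fun y => G y + C) x w = matDirDeriv G x w := by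
  ext i j
  have : (fun y => (G y + C) i j) = fun y => G y i j + C i j := rfl
  simp only [matDirDeriv, this, Matrix.of_apply, fderiv_add_const]

lemma mdd_mul {F G : (Fin d → ℝ) → Matrix (Fin n) (Fin n) ℝ} {x : Fin d → ℝ}
    (hF : ∀ i j, DifferentiableAt ℝ (fun y => F y i j) x)
    (hG : ∀ i j, DifferentiableAt ℝ (fun y => G y i j) x) (w : Fin d → ℝ) :
    matDirDeriv (fun y => F y * G y) x w
      = matDirDeriv F x w * G x + F x * matDirDeriv G x w := by
  ext i j
  have h1 : (fun y => (F y * G y) i j) = fun y => ∑ k, F y i k * G y k j := by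
    funext y; simp [Matrix.mul_apply]
  rw [mdd_apply, h1, fderiv_fun_sum (fun k _ => ((hF i k).fun_mul (hG k j)))]
  rw [ContinuousLinearMap.sum_apply]
  have h2 : ∀ k, (fderiv ℝ (fun y => F y i k * G y k j) x) w
      = (fderiv ℝ (fun y => F y i k) x w) * G x k j + F x i k * (fderiv ℝ (fun y => G y k j) x w) := by
    intro k
    rw [fderiv_fun_mul (hF i k) (hG k j)]
    simp [mul_comm, add_comm]
  rw [Finset.sum_congr rfl (fun k _ => h2 k)]
  simp [Matrix.add_apply, Matrix.mul_apply, mdd_apply, Finset.sum_add_distrib]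

end Cor131

namespace Cor131X
variable {d n : ℕ}

lemma contDiffOn_det {U : Set (Fin d → ℝ)} {A : (Fin d → ℝ) → Matrix (Fin n) (Fin n) ℝ}
    (hA : ∀ i j, ContDiffOn ℝ (⊤ : ℕ∞) (fun y => A y i j) U) :
    ContDiffOn ℝ (⊤ : ℕ∞) (fun y => (A y).det) U := by
  have h : (fun y => (A y).det)
      = fun y => ∑ σ : Equiv.Perm (Fin n), ((Equiv.Perm.sign σ : ℤ) : ℝ) * ∏ i, A y (σ i) i := by
    funext y; rw [Matrix.det_apply']
  rw [h]
  refine ContDiffOn.sum (fun σ _ => ContDiffOn.mul contDiffOn_const ?_)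
  intro x hx
  exact contDiffWithinAt_prod (fun i _ => hA (σ i) i x hx)

lemma contDiffOn_inv_entry {U : Set (Fin d → ℝ)} {A : (Fin d → ℝ) → Matrix (Fin n) (Fin n) ℝ}
    (hA : ∀ i j, ContDiffOn ℝ (⊤ : ℕ∞) (fun y => A y i j) U)
    (hinv : ∀ y ∈ U, IsUnit (A y)) (i j : Fin n) :
    ContDiffOn ℝ (⊤ : ℕ∞) (fun y => (A y)⁻¹ i j) U := by
  have hdet : ContDiffOn ℝ (⊤ : ℕ∞) (fun y => (A y).det) U := contDiffOn_det hA
  have hdetne : ∀ y ∈ U, (A y).det ≠ 0 := fun y hy =>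
    (Matrix.isUnit_iff_isUnit_det (A y)).mp (hinv y hy) |>.ne_zero
  have hadj : ContDiffOn ℝ (⊤ : ℕ∞) (fun y => (A y).adjugate i j) U := by
    have h : (fun y => (A y).adjugate i j)
        = fun y => ((A y).updateRow j (Pi.single i 1)).det := by
      funext y; rw [Matrix.adjugate_apply]
    rw [h]
    refine contDiffOn_det (fun k l => ?_)
    by_cases hkj : k = j
    · subst hkj
      have : (fun y => ((A y).updateRow k (Pi.single i 1)) k l)
          = fun _ => (Pi.single i 1 : Fin n → ℝ) l := by
        funext y; rw [Matrix.updateRow_self]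
      rw [this]; exact contDiffOn_const
    · have : (fun y => ((A y).updateRow j (Pi.single i 1)) k l) = fun y => A y k l := by
        funext y; rw [Matrix.updateRow_ne hkj]
      rw [this]; exact hA k l
  refine ContDiffOn.congr ((hdet.inv hdetne).mul hadj) (fun y hy => ?_)
  rw [Matrix.inv_def, Matrix.smul_apply, Ring.inverse_eq_inv', smul_eq_mul]
  rfl

lemma diffAt_of_contDiffOn {U : Set (Fin d → ℝ)} (hU : IsOpen U) {x : Fin d → ℝ} (hx : x ∈ U)
    {f : (Fin d → ℝ) → ℝ} (hf : ContDiffOn ℝ (⊤ : ℕ∞) f U) : DifferentiableAt ℝ f x :=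
  (hf.contDiffAt (hU.mem_nhds hx)).differentiableAt (by simp)

lemma mdd_inv {U : Set (Fin d → ℝ)} (hU : IsOpen U) {x : Fin d → ℝ} (hx : x ∈ U)
    {A : (Fin d → ℝ) → Matrix (Fin n) (Fin n) ℝ}
    (hA : ∀ i j, ContDiffOn ℝ (⊤ : ℕ∞) (fun y => A y i j) U)
    (hinv : ∀ y ∈ U, IsUnit (A y)) (w : Fin d → ℝ) :
    matDirDeriv (fun y => (A y)⁻¹) x w = -((A x)⁻¹ * matDirDeriv A x w * (A x)⁻¹) := by
  have hdetx : IsUnit (A x).det := (Matrix.isUnit_iff_isUnit_det (A x)).mp (hinv x hx)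
  have hdiffInv : ∀ i j, DifferentiableAt ℝ (fun y => (A y)⁻¹ i j) x :=
    fun i j => diffAt_of_contDiffOn hU hx (contDiffOn_inv_entry hA hinv i j)
  have hdiffA : ∀ i j, DifferentiableAt ℝ (fun y => A y i j) x :=
    fun i j => diffAt_of_contDiffOn hU hx (hA i j)
  have h0 : matDirDeriv (fun y => (A y)⁻¹ * A y) x w = 0 := by
    have := Cor131.mdd_congr hU hx (F := fun y => (A y)⁻¹ * A y) (G := fun _ => 1)
      (fun y hy => Matrix.nonsing_inv_mul (A y)
        ((Matrix.isUnit_iff_isUnit_det (A y)).mp (hinv y hy)))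
    rw [this]; exact Cor131.mdd_const 1 x w
  have h1 := Cor131.mdd_mul hdiffInv hdiffA w
  rw [h0] at h1
  have h2 : matDirDeriv (fun y => (A y)⁻¹) x w * A x = -((A x)⁻¹ * matDirDeriv A x w) := by
    have h3 : matDirDeriv (fun y => (A y)⁻¹) x w * A x + (A x)⁻¹ * matDirDeriv A x w = 0 := h1.symm
    rw [← eq_neg_iff_add_eq_zero] at h3
    exact h3
  calc matDirDeriv (fun y => (A y)⁻¹) x w
      = matDirDeriv (fun y => (A y)⁻¹) x w * (A x * (A x)⁻¹) := by
        rw [Matrix.mul_nonsing_inv (A x) hdetx, mul_one]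
    _ = (matDirDeriv (fun y => (A y)⁻¹) x w * A x) * (A x)⁻¹ := by rw [mul_assoc]
    _ = -((A x)⁻¹ * matDirDeriv A x w) * (A x)⁻¹ := by rw [h2]
    _ = -((A x)⁻¹ * matDirDeriv A x w * (A x)⁻¹) := by rw [neg_mul]

end Cor131X

namespace Cor131Y
variable {n : ℕ}

lemma dot_transpose (M : Matrix (Fin n) (Fin n) ℝ) (u v : Fin n → ℝ) :
    u ⬝ᵥ (Mᵀ).mulVec v = (M.mulVec u) ⬝ᵥ v := by
  rw [Matrix.dotProduct_mulVec, Matrix.vecMul_transpose]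

lemma mul_mulVec (M N : Matrix (Fin n) (Fin n) ℝ) (v : Fin n → ℝ) :
    (M * N).mulVec v = M.mulVec (N.mulVec v) := (Matrix.mulVec_mulVec v M N).symm

lemma mat_ext_of_dot {M N : Matrix (Fin n) (Fin n) ℝ}
    (h : ∀ u v : Fin n → ℝ, u ⬝ᵥ M.mulVec v = u ⬝ᵥ N.mulVec v) : M = N := by
  ext i j
  have := h (Pi.single i 1) (Pi.single j 1)
  simpa [Matrix.mulVec_single, single_dotProduct] using this

lemma antisym_dot {M : Matrix (Fin n) (Fin n) ℝ} (h : Mᵀ = -M) (u v : Fin n → ℝ) :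
    u ⬝ᵥ M.mulVec v = -(v ⬝ᵥ M.mulVec u) := by
  have h1 : u ⬝ᵥ M.mulVec v = (Mᵀ.mulVec u) ⬝ᵥ v := by
    rw [Matrix.dotProduct_mulVec, Matrix.mulVec_transpose]
  rw [h1, h, Matrix.neg_mulVec, neg_dotProduct, dotProduct_comm]

end Cor131Y


open Cor131 Cor131X Cor131Y

/-- Corollary 1.3.1: with `β`, `β₁` closed symplectic 2-form fields, `β₁ = β(K·,·)`,
`β₂ = β(K²·,·)` and `K + t·1` invertible, the 2-form `τ = β₁((K+tI)⁻¹·,·)` satisfies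
`dτ((K+tI)u₁,(K+tI)u₂,(K+tI)u₃) = t·β(N_K(u₁,u₂),u₃) = −t·dβ₂(u₁,u₂,u₃)`. -/
theorem corollary_1_3_1 {m : ℕ} (U : Set (Fin m → ℝ)) (hU : IsOpen U)
    (β β₁ K : (Fin m → ℝ) → Matrix (Fin m) (Fin m) ℝ) (t : ℝ)
    (hβs : ∀ i j, ContDiffOn ℝ (⊤ : ℕ∞) (fun x => β x i j) U)
    (hβ₁s : ∀ i j, ContDiffOn ℝ (⊤ : ℕ∞) (fun x => β₁ x i j) U)
    (hKs : ∀ i j, ContDiffOn ℝ (⊤ : ℕ∞) (fun x => K x i j) U)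
    (hβalt : ∀ x ∈ U, (β x)ᵀ = -β x)
    (hβ₁alt : ∀ x ∈ U, (β₁ x)ᵀ = -β₁ x)
    (hβnd : ∀ x ∈ U, ∀ u : Fin m → ℝ, (∀ v, u ⬝ᵥ (β x).mulVec v = 0) → u = 0)
    (hβ₁nd : ∀ x ∈ U, ∀ u : Fin m → ℝ, (∀ v, u ⬝ᵥ (β₁ x).mulVec v = 0) → u = 0)
    (hβcl : ∀ x ∈ U, ∀ u v w : Fin m → ℝ, form2ExtDeriv β x u v w = 0)
    (hβ₁cl : ∀ x ∈ U, ∀ u v w : Fin m → ℝ, form2ExtDeriv β₁ x u v w = 0)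
    (hrel : ∀ x ∈ U, ∀ u v : Fin m → ℝ,
      u ⬝ᵥ (β₁ x).mulVec v = ((K x).mulVec u) ⬝ᵥ (β x).mulVec v)
    (hinv : ∀ x ∈ U, IsUnit (K x + t • (1 : Matrix (Fin m) (Fin m) ℝ))) :
    (∀ i j, ContDiffOn ℝ (⊤ : ℕ∞) (fun x => tauField β₁ K t x i j) U) ∧
    (∀ x ∈ U, (tauField β₁ K t x)ᵀ = -tauField β₁ K t x) ∧
    ∀ x ∈ U, ∀ u₁ u₂ u₃ : Fin m → ℝ,
      form2ExtDeriv (tauField β₁ K t) x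
          ((K x + t • (1 : Matrix (Fin m) (Fin m) ℝ)).mulVec u₁)
          ((K x + t • (1 : Matrix (Fin m) (Fin m) ℝ)).mulVec u₂)
          ((K x + t • (1 : Matrix (Fin m) (Fin m) ℝ)).mulVec u₃)
        = t * ((nijenhuis K x u₁ u₂) ⬝ᵥ (β x).mulVec u₃) ∧
      t * ((nijenhuis K x u₁ u₂) ⬝ᵥ (β x).mulVec u₃)
        = -t * form2ExtDeriv (fun y => (K y * K y)ᵀ * β y) x u₁ u₂ u₃ := by
    classical
  -- smoothness of the entries of `K + t•1` and its inverse
  have hAs : ∀ i j, ContDiffOn ℝ (⊤ : ℕ∞)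
      (fun y => (K y + t • (1 : Matrix (Fin m) (Fin m) ℝ)) i j) U := by
    intro i j
    have h : (fun y => (K y + t • (1 : Matrix (Fin m) (Fin m) ℝ)) i j)
        = fun y => K y i j + (t • (1 : Matrix (Fin m) (Fin m) ℝ)) i j := rfl
    rw [h]; exact (hKs i j).add contDiffOn_const
  have hAis : ∀ i j, ContDiffOn ℝ (⊤ : ℕ∞)
      (fun y => (K y + t • (1 : Matrix (Fin m) (Fin m) ℝ))⁻¹ i j) U :=
    contDiffOn_inv_entry hAs hinv
  -- matrix form of β₁ on U
  have hb1 : ∀ y ∈ U, β₁ y = (K y)ᵀ * β y := by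
    intro y hy
    refine mat_ext_of_dot (fun u v => ?_)
    rw [hrel y hy u v, mul_mulVec, dot_transpose]
  refine ⟨?_, ?_, ?_⟩
  · -- smoothness of τ entries
    intro i j
    have h : (fun x => tauField β₁ K t x i j)
        = fun x => ∑ k, (K x + t • (1 : Matrix (Fin m) (Fin m) ℝ))⁻¹ k i * β₁ x k j := by
      funext y; simp [tauField, Matrix.mul_apply, Matrix.transpose_apply]
    rw [h]
    exact ContDiffOn.sum fun k _ => (hAis k i).mul (hβ₁s k j)
  · -- τ is alternating on U
    intro x hx
    set A : Matrix (Fin m) (Fin m) ℝ := K x + t • 1 with hAdef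
    have hdetA : IsUnit A.det := (Matrix.isUnit_iff_isUnit_det A).mp (hinv x hx)
    have hAP : A * A⁻¹ = 1 := Matrix.mul_nonsing_inv A hdetA
    have hBK : β x * K x = (K x)ᵀ * β x := by
      have h1 := hβ₁alt x hx
      rw [hb1 x hx, Matrix.transpose_mul, Matrix.transpose_transpose, hβalt x hx,
        Matrix.neg_mul, neg_eq_iff_eq_neg, neg_neg] at h1
      exact h1
    have hBA : β x * A = Aᵀ * β x := by
      rw [hAdef, Matrix.mul_add, Matrix.transpose_add, Matrix.add_mul, hBK,
        Matrix.transpose_smul, Matrix.transpose_one, Matrix.mul_smul, Matrix.smul_mul,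
        mul_one, one_mul]
    have hPAT : (A⁻¹)ᵀ * Aᵀ = 1 := by
      rw [← Matrix.transpose_mul, hAP, Matrix.transpose_one]
    have hPB : (A⁻¹)ᵀ * β x = β x * A⁻¹ := by
      have e1 : Aᵀ * β x * A⁻¹ = β x := by
        rw [← hBA, mul_assoc, hAP, mul_one]
      calc (A⁻¹)ᵀ * β x = (A⁻¹)ᵀ * (Aᵀ * β x * A⁻¹) := by rw [e1]
        _ = ((A⁻¹)ᵀ * Aᵀ) * (β x * A⁻¹) := by simp only [← mul_assoc]
        _ = β x * A⁻¹ := by rw [hPAT, one_mul]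
    have hKT : (K x)ᵀ * β x = Aᵀ * β x - t • β x := by
      rw [hAdef, Matrix.transpose_add, Matrix.add_mul, Matrix.transpose_smul,
        Matrix.transpose_one, Matrix.smul_mul, one_mul]
      abel
    have htauP : tauField β₁ K t x = β x - t • (β x * A⁻¹) := by
      show (A⁻¹)ᵀ * β₁ x = β x - t • (β x * A⁻¹)
      calc (A⁻¹)ᵀ * β₁ x = (A⁻¹)ᵀ * ((K x)ᵀ * β x) := by rw [hb1 x hx]
        _ = (A⁻¹)ᵀ * (Aᵀ * β x) - t • ((A⁻¹)ᵀ * β x) := by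
            rw [hKT, Matrix.mul_sub, Matrix.mul_smul]
        _ = ((A⁻¹)ᵀ * Aᵀ) * β x - t • (β x * A⁻¹) := by rw [hPB, mul_assoc]
        _ = β x - t • (β x * A⁻¹) := by rw [hPAT, one_mul]
    rw [htauP, Matrix.transpose_sub, Matrix.transpose_smul, Matrix.transpose_mul,
      hβalt x hx, Matrix.mul_neg, hPB, smul_neg, sub_neg_eq_add, neg_sub]
    abel
  · -- the main derivative identities
    intro x hx u₁ u₂ u₃
    set A : Matrix (Fin m) (Fin m) ℝ := K x + t • 1 with hAdef
    have hdetA : IsUnit A.det := (Matrix.isUnit_iff_isUnit_det A).mp (hinv x hx)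
    have hAP : A * A⁻¹ = 1 := Matrix.mul_nonsing_inv A hdetA
    have hPA : A⁻¹ * A = 1 := Matrix.nonsing_inv_mul A hdetA
    have hBK : β x * K x = (K x)ᵀ * β x := by
      have h1 := hβ₁alt x hx
      rw [hb1 x hx, Matrix.transpose_mul, Matrix.transpose_transpose, hβalt x hx,
        Matrix.neg_mul, neg_eq_iff_eq_neg, neg_neg] at h1
      exact h1
    have hBA : β x * A = Aᵀ * β x := by
      rw [hAdef, Matrix.mul_add, Matrix.transpose_add, Matrix.add_mul, hBK,
        Matrix.transpose_smul, Matrix.transpose_one, Matrix.mul_smul, Matrix.smul_mul,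
        mul_one, one_mul]
    -- differentiability of entries at x
    have hdK : ∀ i j, DifferentiableAt ℝ (fun y => K y i j) x :=
      fun i j => diffAt_of_contDiffOn hU hx (hKs i j)
    have hdβ : ∀ i j, DifferentiableAt ℝ (fun y => β y i j) x :=
      fun i j => diffAt_of_contDiffOn hU hx (hβs i j)
    have hdβ₁ : ∀ i j, DifferentiableAt ℝ (fun y => β₁ y i j) x :=
      fun i j => diffAt_of_contDiffOn hU hx (hβ₁s i j)
    have hdKT : ∀ i j, DifferentiableAt ℝ (fun y => (K y)ᵀ i j) x := fun i j => hdK j i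
    have hdAi : ∀ i j, DifferentiableAt ℝ
        (fun y => (K y + t • (1 : Matrix (Fin m) (Fin m) ℝ))⁻¹ i j) x :=
      fun i j => diffAt_of_contDiffOn hU hx (hAis i j)
    have hdAiT : ∀ i j, DifferentiableAt ℝ
        (fun y => ((K y + t • (1 : Matrix (Fin m) (Fin m) ℝ))⁻¹)ᵀ i j) x :=
      fun i j => hdAi j i
    have hdKK : ∀ i j, DifferentiableAt ℝ (fun y => (K y * K y) i j) x := by
      intro i j
      have h : (fun y => (K y * K y) i j) = fun y => ∑ k, K y i k * K y k j := by
        funext y; simp [Matrix.mul_apply]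
      rw [h]
      exact DifferentiableAt.fun_sum (fun k _ => (hdK i k).mul (hdK k j))
    have hdKKT : ∀ i j, DifferentiableAt ℝ (fun y => ((K y * K y)ᵀ) i j) x :=
      fun i j => hdKK j i
    -- derivative identities
    have hDb1 : ∀ w, matDirDeriv β₁ x w
        = (matDirDeriv K x w)ᵀ * β x + (K x)ᵀ * matDirDeriv β x w := by
      intro w
      have hc := mdd_congr hU hx hb1
      rw [congrFun hc w, mdd_mul hdKT hdβ w, mdd_transpose]
    have hDb2 : ∀ w, matDirDeriv (fun y => (K y * K y)ᵀ * β y) x w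
        = (matDirDeriv K x w * K x + K x * matDirDeriv K x w)ᵀ * β x
          + (K x * K x)ᵀ * matDirDeriv β x w := by
      intro w
      rw [mdd_mul hdKKT hdβ w, mdd_transpose, mdd_mul hdK hdK w]
    have hDP : ∀ w, matDirDeriv (fun y => (K y + t • (1 : Matrix (Fin m) (Fin m) ℝ))⁻¹) x w
        = -(A⁻¹ * (matDirDeriv K x w) * A⁻¹) := by
      intro w
      have h := mdd_inv hU hx hAs hinv w
      rw [mdd_add_const K (t • 1) x w] at h
      exact h
    have hKP : K x * A⁻¹ = 1 - t • A⁻¹ := by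
      have hKA : K x = A - t • 1 := by rw [hAdef]; abel
      rw [hKA, Matrix.sub_mul, Matrix.smul_mul, one_mul, hAP]
    have hPKmul : ∀ M : Matrix (Fin m) (Fin m) ℝ,
        (A⁻¹)ᵀ * ((K x)ᵀ * M) = M - t • ((A⁻¹)ᵀ * M) := by
      have hPKT : (A⁻¹)ᵀ * (K x)ᵀ = 1 - t • (A⁻¹)ᵀ := by
        rw [← Matrix.transpose_mul, hKP, Matrix.transpose_sub, Matrix.transpose_one,
          Matrix.transpose_smul]
      intro M
      rw [← mul_assoc, hPKT, Matrix.sub_mul, one_mul, Matrix.smul_mul]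
    have hDtau : ∀ w, matDirDeriv (tauField β₁ K t) x w
        = matDirDeriv β x w
          + t • ((A⁻¹)ᵀ * ((matDirDeriv K x w)ᵀ * ((A⁻¹)ᵀ * β x)))
          - t • ((A⁻¹)ᵀ * matDirDeriv β x w) := by
      intro w
      have hstep : matDirDeriv (tauField β₁ K t) x w
          = (-(A⁻¹ * (matDirDeriv K x w) * A⁻¹))ᵀ * β₁ x
            + (A⁻¹)ᵀ * matDirDeriv β₁ x w := by
        rw [show tauField β₁ K t
            = (fun y => ((K y + t • (1 : Matrix (Fin m) (Fin m) ℝ))⁻¹)ᵀ * β₁ y) from rfl]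
        rw [mdd_mul hdAiT hdβ₁ w, mdd_transpose, hDP w]
      rw [hstep, hDb1 w, hb1 x hx]
      simp only [Matrix.transpose_neg, Matrix.transpose_mul, Matrix.neg_mul, Matrix.mul_add,
        mul_assoc, hPKmul, Matrix.mul_sub, mul_smul_comm, smul_sub]
      abel
    -- vector-level helpers
    have hPAv : ∀ v : Fin m → ℝ, (A⁻¹).mulVec (A.mulVec v) = v := by
      intro v; rw [Matrix.mulVec_mulVec, hPA, Matrix.one_mulVec]
    have hcancel : ∀ p q : Fin m → ℝ,
        ((A⁻¹).mulVec p) ⬝ᵥ (β x).mulVec (A.mulVec q) = p ⬝ᵥ (β x).mulVec q := by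
      intro p q
      rw [Matrix.mulVec_mulVec, hBA, mul_mulVec, dot_transpose, Matrix.mulVec_mulVec, hAP,
        Matrix.one_mulVec]
    have hAv : ∀ v : Fin m → ℝ, A.mulVec v = (K x).mulVec v + t • v := by
      intro v
      rw [hAdef, Matrix.add_mulVec, Matrix.smul_mulVec, Matrix.one_mulVec]
    have hBKdot : ∀ p q : Fin m → ℝ,
        p ⬝ᵥ (β x).mulVec ((K x).mulVec q) = ((K x).mulVec p) ⬝ᵥ (β x).mulVec q := by
      intro p q
      rw [Matrix.mulVec_mulVec, hBK, mul_mulVec, dot_transpose]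
    have hb1altD : (matDirDeriv β₁ x u₃)ᵀ = -(matDirDeriv β₁ x u₃) := by
      have hc := mdd_congr hU hx (F := fun y => (β₁ y)ᵀ) (G := fun y => -(β₁ y))
        (fun y hy => hβ₁alt y hy)
      have h1 := congrFun hc u₃
      rw [mdd_transpose, mdd_neg] at h1
      exact h1
    constructor
    · -- dτ(Au₁,Au₂,Au₃) = t β(N(u₁,u₂),u₃)
      have I4a := hβ₁cl x hx u₁ u₂ u₃
      have I4b := hβ₁cl x hx u₁ u₂ ((K x).mulVec u₃)
      have I3a := hβcl x hx ((K x).mulVec u₁) ((K x).mulVec u₂) u₃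
      have I3b := hβcl x hx ((K x).mulVec u₁) ((K x).mulVec u₂) ((K x).mulVec u₃)
      have Ih2a := hBKdot ((matDirDeriv K x u₁).mulVec u₂) u₃
      have Ih2b := hBKdot ((matDirDeriv K x u₂).mulVec u₁) u₃
      simp only [form2ExtDeriv, hDb1] at I4a I4b I3a I3b
      simp only [Matrix.transpose_mul, Matrix.transpose_add, mul_mulVec, dot_transpose,
        Matrix.add_mulVec, Matrix.sub_mulVec, Matrix.neg_mulVec, Matrix.smul_mulVec,
        Matrix.mulVec_add, Matrix.mulVec_sub, Matrix.mulVec_neg, Matrix.mulVec_smul,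
        Matrix.one_mulVec, add_dotProduct, dotProduct_add, sub_dotProduct,
        dotProduct_sub, neg_dotProduct, dotProduct_neg,
        smul_dotProduct, dotProduct_smul, smul_eq_mul, mdd_dir_add, mdd_dir_smul]
        at I4a I4b I3a I3b
      simp only [form2ExtDeriv, nijenhuis, hDtau]
      simp only [mul_mulVec, dot_transpose, Matrix.add_mulVec, Matrix.sub_mulVec,
        Matrix.neg_mulVec, Matrix.smul_mulVec, Matrix.mulVec_add, Matrix.mulVec_sub,
        Matrix.mulVec_neg, Matrix.mulVec_smul, Matrix.one_mulVec, add_dotProduct,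
        dotProduct_add, sub_dotProduct, dotProduct_sub,
        neg_dotProduct, dotProduct_neg, smul_dotProduct,
        dotProduct_smul, smul_eq_mul, hPAv, hcancel]
      simp only [hAv, mdd_dir_add, mdd_dir_smul, Matrix.add_mulVec, Matrix.sub_mulVec,
        Matrix.neg_mulVec, Matrix.smul_mulVec, Matrix.mulVec_add, Matrix.mulVec_sub,
        Matrix.mulVec_neg, Matrix.mulVec_smul, Matrix.one_mulVec, add_dotProduct,
        dotProduct_add, sub_dotProduct, dotProduct_sub,
        neg_dotProduct, dotProduct_neg, smul_dotProduct,
        dotProduct_smul, smul_eq_mul, mul_mulVec, dot_transpose]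
      linear_combination (t^2) * I4a + t * I4b + t * I3a + I3b - t * Ih2a + t * Ih2b
    · -- t β(N(u₁,u₂),u₃) = -t dβ₂(u₁,u₂,u₃)
      have IA1 := hβ₁cl x hx u₁ ((K x).mulVec u₂) u₃
      have IA2 := hβ₁cl x hx u₂ ((K x).mulVec u₁) u₃
      have IA3 := hβcl x hx ((K x).mulVec u₁) ((K x).mulVec u₂) u₃
      have IH6 := antisym_dot hb1altD ((K x).mulVec u₁) u₂
      have Ih2c := hBKdot ((matDirDeriv K x u₃).mulVec u₁) u₂
      simp only [form2ExtDeriv, hDb1] at IA1 IA2 IA3 IH6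
      simp only [Matrix.transpose_mul, Matrix.transpose_add, mul_mulVec, dot_transpose,
        Matrix.add_mulVec, Matrix.sub_mulVec, Matrix.neg_mulVec, Matrix.smul_mulVec,
        Matrix.mulVec_add, Matrix.mulVec_sub, Matrix.mulVec_neg, Matrix.mulVec_smul,
        Matrix.one_mulVec, add_dotProduct, dotProduct_add, sub_dotProduct,
        dotProduct_sub, neg_dotProduct, dotProduct_neg,
        smul_dotProduct, dotProduct_smul, smul_eq_mul, mdd_dir_add, mdd_dir_smul]
        at IA1 IA2 IA3 IH6
      simp only [form2ExtDeriv, nijenhuis, hDb2]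
      simp only [Matrix.transpose_mul, Matrix.transpose_add, mul_mulVec, dot_transpose,
        Matrix.add_mulVec, Matrix.sub_mulVec, Matrix.neg_mulVec, Matrix.smul_mulVec,
        Matrix.mulVec_add, Matrix.mulVec_sub, Matrix.mulVec_neg, Matrix.mulVec_smul,
        Matrix.one_mulVec, add_dotProduct, dotProduct_add, sub_dotProduct,
        dotProduct_sub, neg_dotProduct, dotProduct_neg,
        smul_dotProduct, dotProduct_smul, smul_eq_mul, mdd_dir_add, mdd_dir_smul]
      linear_combination t * IA1 - t * IA2 - t * IA3 + t * IH6 - t * Ih2c
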